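/- There is an exact sequence 0 → ℤ_p → ℤ_p[[T]]^{ψ=id} →^{1-φ} ℤ_p[[T]]^{ψ=0} → ℤ_p → 0, where the first map is the inclusion of constants, and the last map is evaluation at T = 0. -/

import Mathlib

open PowerSeries

variable (p : ℕ) [Fact p.Prime]

/-- `hφ` characterizes the operator `φ(f)(T) = f((1+T)^p - 1)` on `ℤ_p[[T]]`. -/
def IsFrobenius (φ : PowerSeries ℤ_[p] →+* PowerSeries ℤ_[p]) : Prop :=
  ∀ (f : PowerSeries ℤ_[p]) (n : ℕ),
    PowerSeries.coeff n (φ f) =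
      PowerSeries.coeff n
        (Polynomial.eval₂ (PowerSeries.C) ((1 + PowerSeries.X) ^ p - 1)
          (PowerSeries.trunc (n + 1) f))

/-- `ψ` is the trace-type operator on `ℤ_p[[T]]`, satisfying
`φ∘ψ(f)(T) = p⁻¹ Σ_{ξ ∈ μ_p} f(ξ(1+T) - 1)`; equivalently `ψ = p⁻¹ φ⁻¹ ∘ Tr` for the
degree-`p` extension `ℤ_p[[T]] / φ(ℤ_p[[T]])`, i.e. `p·ψ(f) = Tr(f)`. -/
def IsPsi (φ : PowerSeries ℤ_[p] →+* PowerSeries ℤ_[p])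
    (ψ : PowerSeries ℤ_[p] → PowerSeries ℤ_[p]) : Prop :=
  ∀ f : PowerSeries ℤ_[p],
    (p : PowerSeries ℤ_[p]) * ψ f =
      @Algebra.trace (PowerSeries ℤ_[p]) (PowerSeries ℤ_[p]) _ _ φ.toAlgebra f

namespace FES

variable {p : ℕ} [hp : Fact p.Prime]

/-- The power series `(1+X)^p - 1`. -/
noncomputable def Ps (p : ℕ) [Fact p.Prime] : PowerSeries ℤ_[p] := (1 + X) ^ p - 1

lemma coeff_one_add_X_pow (n k : ℕ) :
    coeff k ((1 + X) ^ n) = (n.choose k : ℤ_[p]) := by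
  have : ((1 : PowerSeries ℤ_[p]) + X) = ((Polynomial.X + 1 : Polynomial ℤ_[p]) : PowerSeries ℤ_[p]) := by
    push_cast [Polynomial.coe_add, Polynomial.coe_one, Polynomial.coe_X]
    ring
  rw [this, ← Polynomial.coe_pow, Polynomial.coeff_coe, Polynomial.coeff_X_add_one_pow]

lemma coeff_Ps (n : ℕ) :
    coeff n (Ps p) = if n = 0 then 0 else (p.choose n : ℤ_[p]) := by
  rcases eq_or_ne n 0 with h | h <;>
    simp [Ps, map_sub, coeff_one_add_X_pow, h, coeff_zero_eq_constantCoeff]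

/-- The "unit" part: `Ps = X * Us` with constant coefficient `p`. -/
noncomputable def Us (p : ℕ) [Fact p.Prime] : PowerSeries ℤ_[p] :=
  PowerSeries.mk fun j => (p.choose (j + 1) : ℤ_[p])

lemma Ps_eq_X_mul_Us : Ps p = X * Us p := by
  ext n
  cases n with
  | zero => simp [coeff_Ps, coeff_zero_eq_constantCoeff]
  | succ n => simp [coeff_Ps, coeff_succ_X_mul, Us]

lemma constantCoeff_Us : constantCoeff (Us p) = (p : ℤ_[p]) := by
  have := coeff_mk 0 (fun j => (p.choose (j + 1) : ℤ_[p]))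
  simp only [zero_add, Nat.choose_one_right] at this
  simpa [Us, coeff_zero_eq_constantCoeff] using this

lemma coeff_Ps_pow_of_lt {n m : ℕ} (h : n < m) : coeff n ((Ps p) ^ m) = 0 := by
  have : (X : PowerSeries ℤ_[p]) ^ m ∣ (Ps p) ^ m := by
    rw [Ps_eq_X_mul_Us, mul_pow]; exact Dvd.intro _ rfl
  exact PowerSeries.X_pow_dvd_iff.mp this n h

lemma coeff_Ps_pow_self (n : ℕ) : coeff n ((Ps p) ^ n) = (p : ℤ_[p]) ^ n := by
  rw [Ps_eq_X_mul_Us, mul_pow]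
  have := coeff_X_pow_mul ((Us p) ^ n) n 0
  rw [zero_add] at this
  rw [this, coeff_zero_eq_constantCoeff, map_pow, constantCoeff_Us]

section phi

variable (φ : PowerSeries ℤ_[p] →+* PowerSeries ℤ_[p]) (hφ : IsFrobenius p φ)

include hφ in
lemma coeff_phi (f : PowerSeries ℤ_[p]) (n : ℕ) :
    coeff n (φ f) =
      ∑ m ∈ Finset.range (n + 1), coeff m f * coeff n ((Ps p) ^ m) := by
  rw [hφ f n, Polynomial.eval₂_eq_sum_range' (PowerSeries.C (R := ℤ_[p]))
    (natDegree_trunc_lt f n) _, map_sum]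
  refine Finset.sum_congr rfl fun m hm => ?_
  rw [Finset.mem_range] at hm
  rw [PowerSeries.coeff_trunc, if_pos hm, coeff_C_mul]
  rfl

include hφ in
lemma phi_C (a : ℤ_[p]) : φ (C a) = C a := by
  ext n
  rw [coeff_phi φ hφ]
  rcases eq_or_ne n 0 with rfl | h
  · simp [coeff_zero_eq_constantCoeff]
  · rw [Finset.sum_eq_zero, coeff_C, if_neg h]
    intro m hm
    rcases eq_or_ne m 0 with rfl | hm0
    · simp [pow_zero, coeff_one, h]
    · simp [coeff_C, hm0]

include hφ in
lemma constantCoeff_phi (f : PowerSeries ℤ_[p]) :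
    coeff 0 (φ f) = coeff 0 f := by
  rw [coeff_phi φ hφ]
  simp

end phi

lemma toZMod_eq_zero_iff_dvd (x : ℤ_[p]) :
    PadicInt.toZMod x = 0 ↔ (p : ℤ_[p]) ∣ x := by
  rw [← RingHom.mem_ker, PadicInt.ker_toZMod, PadicInt.maximalIdeal_eq_span_p,
    Ideal.mem_span_singleton]

lemma norm_p_pow_mul_le (k : ℕ) (y : ℤ_[p]) : ‖(p : ℤ_[p]) ^ k * y‖ ≤ ((p : ℝ)⁻¹) ^ k := by
  rw [norm_mul, PadicInt.norm_p_pow]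
  have h2 : ((p:ℝ) ^ (-(k:ℤ))) = ((p:ℝ)⁻¹)^k := by
    rw [zpow_neg, inv_pow, zpow_natCast]
  rw [h2]
  calc ((p:ℝ)⁻¹)^k * ‖y‖ ≤ ((p:ℝ)⁻¹)^k * 1 := by
        gcongr; exact PadicInt.norm_le_one y
    _ = _ := mul_one _

lemma p_inv_lt_one : (p : ℝ)⁻¹ < 1 := by
  rw [inv_lt_one_iff₀]
  right
  exact_mod_cast hp.out.one_lt

omit hp in
lemma p_inv_nonneg : (0:ℝ) ≤ (p : ℝ)⁻¹ := by positivity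

lemma summable_p_inv : Summable (fun k : ℕ => ((p:ℝ)⁻¹) ^ k) :=
  summable_geometric_of_lt_one p_inv_nonneg p_inv_lt_one

lemma eq_zero_of_forall_pow_dvd (x : ℤ_[p]) (h : ∀ k : ℕ, (p : ℤ_[p]) ^ k ∣ x) : x = 0 := by
  have hnorm : ∀ k : ℕ, ‖x‖ ≤ ((p : ℝ)⁻¹) ^ k := by
    intro k
    obtain ⟨y, rfl⟩ := h k
    exact norm_p_pow_mul_le k y
  have : Filter.Tendsto (fun k : ℕ => ((p:ℝ)⁻¹)^k) Filter.atTop (nhds 0) :=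
    tendsto_pow_atTop_nhds_zero_of_lt_one p_inv_nonneg p_inv_lt_one
  have hx : ‖x‖ ≤ 0 := ge_of_tendsto this (Filter.Eventually.of_forall hnorm)
  simpa using le_antisymm hx (norm_nonneg x)

lemma natCast_p_eq_C : (p : PowerSeries ℤ_[p]) = C (p : ℤ_[p]) :=
  (map_natCast (C (R := ℤ_[p])) p).symm

lemma coeff_p_mul (F : PowerSeries ℤ_[p]) (n : ℕ) :
    coeff n ((p : PowerSeries ℤ_[p]) * F) = (p : ℤ_[p]) * coeff n F := by
  rw [natCast_p_eq_C, coeff_C_mul]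

lemma p_ne_zero_ps : (p : PowerSeries ℤ_[p]) ≠ 0 := by
  intro h
  have := congrArg (constantCoeff (R := ℤ_[p])) h
  rw [map_natCast, map_zero] at this
  exact hp.out.ne_zero (by exact_mod_cast this)

/-- dividing a power series with all coefficients divisible by p -/
lemma exists_div_p {F : PowerSeries ℤ_[p]} (h : ∀ n, (p : ℤ_[p]) ∣ coeff n F) :
    ∃ G, F = (p : PowerSeries ℤ_[p]) * G := by
  refine ⟨PowerSeries.mk fun n => Classical.choose (h n), ?_⟩
  ext n
  have hn := Classical.choose_spec (h n)
  rw [natCast_p_eq_C, coeff_C_mul, coeff_mk, ← hn]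

noncomputable def rb (p : ℕ) [Fact p.Prime] : PowerSeries ℤ_[p] →+* PowerSeries (ZMod p) :=
  PowerSeries.map (PadicInt.toZMod : ℤ_[p] →+* ZMod p)

lemma coeff_rb (F : PowerSeries ℤ_[p]) (n : ℕ) :
    coeff n (rb p F) = PadicInt.toZMod (coeff n F) :=
  PowerSeries.coeff_map _ _ _

lemma rb_Ps : rb p (Ps p) = X ^ p := by
  ext n
  rw [coeff_rb, coeff_Ps, coeff_X_pow]
  rcases eq_or_ne n 0 with rfl | h0
  · rw [if_pos rfl, if_neg (by exact fun h => hp.out.ne_zero h.symm), map_zero]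
  rw [if_neg h0, map_natCast]
  rcases lt_trichotomy n p with hlt | rfl | hgt
  · rw [if_neg (Nat.ne_of_lt hlt), ZMod.natCast_eq_zero_iff]
    exact hp.out.dvd_choose_self h0 hlt
  · simp [Nat.choose_self]
  · rw [Nat.choose_eq_zero_of_lt hgt, if_neg (Nat.ne_of_gt hgt)]
    simp

lemma toZMod_coeff_Ps_pow (n m : ℕ) :
    PadicInt.toZMod (coeff n ((Ps p) ^ m)) = if n = p * m then 1 else 0 := by
  have : PadicInt.toZMod (coeff n ((Ps p) ^ m)) = coeff n ((rb p (Ps p)) ^ m) := by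
    rw [← map_pow, coeff_rb]
  rw [this, rb_Ps, ← pow_mul, coeff_X_pow]

section Phi

variable (φ : PowerSeries ℤ_[p] →+* PowerSeries ℤ_[p]) (hφ : IsFrobenius p φ)

/-- The decomposition map: `g ↦ ∑ φ(gᵢ)·Xⁱ`. -/
noncomputable def Phi (g : Fin p → PowerSeries ℤ_[p]) : PowerSeries ℤ_[p] :=
  ∑ i : Fin p, φ (g i) * X ^ (i : ℕ)

include hφ in
lemma coeff_Phi (g : Fin p → PowerSeries ℤ_[p]) (n : ℕ) :
    coeff n (Phi φ g) =
      ∑ i : Fin p, ∑ m ∈ Finset.range (n + 1),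
        coeff m (g i) *
          (if (i : ℕ) ≤ n then coeff (n - (i : ℕ)) ((Ps p) ^ m) else 0) := by
  rw [Phi, map_sum]
  refine Finset.sum_congr rfl fun i _ => ?_
  rw [coeff_mul_X_pow']
  split_ifs with h
  · rw [coeff_phi φ hφ]
    refine Finset.sum_subset (by
      intro m hm
      rw [Finset.mem_range] at *
      omega) (fun m hm hm' => ?_)
    rw [Finset.mem_range] at hm hm'
    rw [coeff_Ps_pow_of_lt (by omega), mul_zero]
  · simp

include hφ in
lemma toZMod_coeff_Phi (g : Fin p → PowerSeries ℤ_[p]) (n : ℕ) :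
    PadicInt.toZMod (coeff n (Phi φ g)) =
      PadicInt.toZMod (coeff (n / p) (g ⟨n % p, Nat.mod_lt n hp.out.pos⟩)) := by
  classical
  set i₀ : Fin p := ⟨n % p, Nat.mod_lt n hp.out.pos⟩ with hi₀
  rw [coeff_Phi φ hφ]
  simp only [map_sum]
  have hterm : ∀ i : Fin p, ∀ m ∈ Finset.range (n + 1),
      PadicInt.toZMod (coeff m (g i) *
        (if (i : ℕ) ≤ n then coeff (n - (i : ℕ)) ((Ps p) ^ m) else 0)) =
      if i = i₀ then (if m = n / p then PadicInt.toZMod (coeff m (g i)) else 0) else 0 := by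
    intro i m _
    rw [map_mul, apply_ite PadicInt.toZMod, map_zero, toZMod_coeff_Ps_pow]
    have hcond : ((i : ℕ) ≤ n ∧ n - (i : ℕ) = p * m) ↔ (i = i₀ ∧ m = n / p) := by
      constructor
      · rintro ⟨h1, h2⟩
        have hn : n = p * m + (i : ℕ) := by omega
        have hi : (i : ℕ) = n % p := by
          rw [hn, Nat.mul_add_mod, Nat.mod_eq_of_lt i.isLt]
        have hm : m = n / p := by
          rw [hn, Nat.mul_add_div hp.out.pos, Nat.div_eq_of_lt i.isLt, add_zero]
        exact ⟨Fin.ext hi, hm⟩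
      · rintro ⟨rfl, rfl⟩
        have h1 : (i₀ : ℕ) = n % p := rfl
        have h2 := Nat.div_add_mod n p
        exact ⟨by omega, by omega⟩
    have hre : (if (i : ℕ) ≤ n then (if n - (i : ℕ) = p * m then (1 : ZMod p) else 0) else 0)
        = if (i = i₀ ∧ m = n / p) then 1 else 0 := by
      rw [← ite_and]; exact if_congr hcond rfl rfl
    rw [hre]
    split_ifs <;> first | exact mul_one _ | exact mul_zero _ | tauto
  rw [Finset.sum_congr rfl (fun i _ => Finset.sum_congr rfl (hterm i))]
  have hmem : n / p ∈ Finset.range (n + 1) := by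
    rw [Finset.mem_range]; exact Nat.lt_succ_of_le (Nat.div_le_self n p)
  have hstep : ∀ i : Fin p,
      (∑ m ∈ Finset.range (n + 1), if i = i₀ then
        (if m = n / p then PadicInt.toZMod (coeff m (g i)) else 0) else 0)
      = if i = i₀ then PadicInt.toZMod (coeff (n / p) (g i)) else 0 := by
    intro i
    by_cases h : i = i₀
    · simp only [if_pos h]
      rw [Finset.sum_ite_eq' (Finset.range (n + 1)) (n / p)
        (fun m => PadicInt.toZMod (coeff m (g i))), if_pos hmem]
    · simp only [if_neg h, Finset.sum_const_zero]
  rw [Finset.sum_congr rfl (fun i _ => hstep i),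
    Finset.sum_ite_eq' Finset.univ i₀
      (fun i => PadicInt.toZMod (coeff (n / p) (g i))), if_pos (Finset.mem_univ _)]

end Phi

section Phi2

variable (φ : PowerSeries ℤ_[p] →+* PowerSeries ℤ_[p]) (hφ : IsFrobenius p φ)

lemma Phi_p_mul (g : Fin p → PowerSeries ℤ_[p]) :
    Phi φ (fun i => (p : PowerSeries ℤ_[p]) * g i) = (p : PowerSeries ℤ_[p]) * Phi φ g := by
  rw [Phi, Phi, Finset.mul_sum]
  refine Finset.sum_congr rfl fun i _ => ?_
  rw [map_mul, map_natCast, mul_assoc]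

include hφ in
lemma dvd_coeff_of_Phi_eq_zero (g : Fin p → PowerSeries ℤ_[p]) (h : Phi φ g = 0)
    (i : Fin p) (m : ℕ) : (p : ℤ_[p]) ∣ coeff m (g i) := by
  have key := toZMod_coeff_Phi φ hφ g (p * m + (i : ℕ))
  rw [h, map_zero, map_zero] at key
  have hmod : (p * m + (i : ℕ)) % p = (i : ℕ) := by
    rw [Nat.mul_add_mod, Nat.mod_eq_of_lt i.isLt]
  have hdiv : (p * m + (i : ℕ)) / p = m := by
    rw [Nat.mul_add_div hp.out.pos, Nat.div_eq_of_lt i.isLt, add_zero]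
  rw [← toZMod_eq_zero_iff_dvd]
  have : (⟨(p * m + (i : ℕ)) % p, Nat.mod_lt _ hp.out.pos⟩ : Fin p) = i := by
    apply Fin.ext; simp [hmod]
  rw [this, hdiv] at key
  exact key.symm

include hφ in
lemma pow_dvd_coeff_of_Phi_eq_zero :
    ∀ (k : ℕ) (g : Fin p → PowerSeries ℤ_[p]), Phi φ g = 0 →
      ∀ (i : Fin p) (m : ℕ), (p : ℤ_[p]) ^ k ∣ coeff m (g i) := by
  intro k
  induction k with
  | zero => intro g _ i m; simp
  | succ k ih =>
    intro g h i m
    have hdvd := dvd_coeff_of_Phi_eq_zero φ hφ g h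
    choose G hG using fun i => exists_div_p (hdvd i)
    have hg : g = fun j => (p : PowerSeries ℤ_[p]) * G j := funext hG
    have hPhiG : Phi φ G = 0 := by
      rw [hg, Phi_p_mul] at h
      rcases mul_eq_zero.mp h with h' | h'
      · exact absurd h' p_ne_zero_ps
      · exact h'
    have := ih G hPhiG i m
    rw [hG i, coeff_p_mul, pow_succ, mul_comm ((p:ℤ_[p])^k)]
    exact mul_dvd_mul_left _ this

include hφ in
lemma Phi_injective0 (g : Fin p → PowerSeries ℤ_[p]) (h : Phi φ g = 0) : g = 0 := by
  funext i
  show g i = 0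
  ext m
  rw [map_zero]
  exact eq_zero_of_forall_pow_dvd _ fun k => pow_dvd_coeff_of_Phi_eq_zero φ hφ k g h i m


/-- first-order approximation of the preimage under Φ -/
noncomputable def stepg (f : PowerSeries ℤ_[p]) : Fin p → PowerSeries ℤ_[p] :=
  fun i => PowerSeries.mk fun m => coeff (p * m + (i : ℕ)) f

include hφ in
lemma toZMod_coeff_Phi_stepg (f : PowerSeries ℤ_[p]) (n : ℕ) :
    PadicInt.toZMod (coeff n (Phi φ (stepg f))) = PadicInt.toZMod (coeff n f) := by
  rw [toZMod_coeff_Phi φ hφ]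
  show PadicInt.toZMod (coeff (n / p) (PowerSeries.mk _)) = _
  rw [coeff_mk]
  have harg : p * (n / p) + ((⟨n % p, Nat.mod_lt n hp.out.pos⟩ : Fin p) : ℕ) = n :=
    Nat.div_add_mod n p
  rw [harg]

include hφ in
lemma exists_rem (f : PowerSeries ℤ_[p]) :
    ∃ h, f = Phi φ (stepg f) + (p : PowerSeries ℤ_[p]) * h := by
  have hdvd : ∀ n, (p : ℤ_[p]) ∣ coeff n (f - Phi φ (stepg f)) := by
    intro n
    rw [← toZMod_eq_zero_iff_dvd, map_sub, map_sub, toZMod_coeff_Phi_stepg φ hφ, sub_self]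
  obtain ⟨G, hG⟩ := exists_div_p hdvd
  exact ⟨G, by linear_combination hG⟩

/-- successive remainders -/
noncomputable def Fseq (f : PowerSeries ℤ_[p]) : ℕ → PowerSeries ℤ_[p]
  | 0 => f
  | (k+1) => Classical.choose (exists_rem φ hφ (Fseq f k))

lemma Fseq_spec (f : PowerSeries ℤ_[p]) (k : ℕ) :
    Fseq φ hφ f k = Phi φ (stepg (Fseq φ hφ f k))
      + (p : PowerSeries ℤ_[p]) * Fseq φ hφ f (k+1) :=
  Classical.choose_spec (exists_rem φ hφ (Fseq φ hφ f k))

/-- the solution of `Φ g = f` -/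
noncomputable def gsol (f : PowerSeries ℤ_[p]) : Fin p → PowerSeries ℤ_[p] :=
  fun i => PowerSeries.mk fun m =>
    ∑' k : ℕ, (p : ℤ_[p]) ^ k * coeff m (stepg (Fseq φ hφ f k) i)

lemma hasSum_gsol (f : PowerSeries ℤ_[p]) (i : Fin p) (m : ℕ) :
    HasSum (fun k : ℕ => (p : ℤ_[p]) ^ k * coeff m (stepg (Fseq φ hφ f k) i))
      (coeff m (gsol φ hφ f i)) := by
  have hsummable : Summable (fun k : ℕ => (p : ℤ_[p]) ^ k * coeff m (stepg (Fseq φ hφ f k) i)) :=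
    Summable.of_norm_bounded summable_p_inv (fun k => norm_p_pow_mul_le k _)
  have : coeff m (gsol φ hφ f i)
      = ∑' k : ℕ, (p : ℤ_[p]) ^ k * coeff m (stepg (Fseq φ hφ f k) i) := coeff_mk _ _
  rw [this]
  exact hsummable.hasSum

include hφ in
lemma Phi_gsol (f : PowerSeries ℤ_[p]) : Phi φ (gsol φ hφ f) = f := by
  ext n
  set w : Fin p → ℕ → ℤ_[p] := fun i m =>
    (if (i : ℕ) ≤ n then coeff (n - (i : ℕ)) ((Ps p) ^ m) else 0) with hw
  -- A : HasSum of coefficientwise images under Phi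
  have hA : HasSum
      (fun k : ℕ => ∑ i : Fin p, ∑ m ∈ Finset.range (n + 1),
        ((p : ℤ_[p]) ^ k * coeff m (stepg (Fseq φ hφ f k) i)) * w i m)
      (∑ i : Fin p, ∑ m ∈ Finset.range (n + 1), coeff m (gsol φ hφ f i) * w i m) :=
    hasSum_sum fun i _ => hasSum_sum fun m _ => (hasSum_gsol φ hφ f i m).mul_right _
  have hfun : (fun k : ℕ => ∑ i : Fin p, ∑ m ∈ Finset.range (n + 1),
        ((p : ℤ_[p]) ^ k * coeff m (stepg (Fseq φ hφ f k) i)) * w i m)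
      = fun k : ℕ => (p : ℤ_[p]) ^ k * coeff n (Phi φ (stepg (Fseq φ hφ f k))) := by
    funext k
    rw [coeff_Phi φ hφ, Finset.mul_sum]
    refine Finset.sum_congr rfl fun i _ => ?_
    rw [Finset.mul_sum]
    refine Finset.sum_congr rfl fun m _ => ?_
    ring
  rw [hfun] at hA
  rw [← coeff_Phi φ hφ] at hA
  -- B : telescoping identity
  set u : ℕ → ℤ_[p] := fun k => (p : ℤ_[p]) ^ k * coeff n (Fseq φ hφ f k) with hu
  have hB : ∀ k, (p : ℤ_[p]) ^ k * coeff n (Phi φ (stepg (Fseq φ hφ f k)))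
      = u k - u (k + 1) := by
    intro k
    have := congrArg (coeff (R := ℤ_[p]) n) (Fseq_spec φ hφ f k)
    rw [map_add, coeff_p_mul] at this
    have h2 : coeff n (Phi φ (stepg (Fseq φ hφ f k)))
        = coeff n (Fseq φ hφ f k) - (p : ℤ_[p]) * coeff n (Fseq φ hφ f (k+1)) := by
      linear_combination -this
    rw [h2, hu]
    simp only [pow_succ]
    ring
  -- C : the telescoping series sums to u 0
  have hnorm_u : ∀ k, ‖u k‖ ≤ ((p:ℝ)⁻¹) ^ k := fun k => norm_p_pow_mul_le k _
  have hu0 : Filter.Tendsto u Filter.atTop (nhds 0) := by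
    refine squeeze_zero_norm hnorm_u ?_
    exact tendsto_pow_atTop_nhds_zero_of_lt_one p_inv_nonneg p_inv_lt_one
  have hsummable : Summable (fun k : ℕ => u k - u (k + 1)) := by
    refine Summable.of_norm_bounded (g := fun k => 2 * ((p:ℝ)⁻¹) ^ k)
      (summable_p_inv.mul_left 2) (fun k => ?_)
    calc ‖u k - u (k+1)‖ ≤ ‖u k‖ + ‖u (k+1)‖ := norm_sub_le _ _
      _ ≤ ((p:ℝ)⁻¹)^k + ((p:ℝ)⁻¹)^(k+1) := add_le_add (hnorm_u k) (hnorm_u (k+1))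
      _ ≤ ((p:ℝ)⁻¹)^k + ((p:ℝ)⁻¹)^k := add_le_add le_rfl
          (pow_le_pow_of_le_one p_inv_nonneg (le_of_lt p_inv_lt_one) (Nat.le_succ k))
      _ = 2 * ((p:ℝ)⁻¹)^k := by ring
  have hC : HasSum (fun k : ℕ => u k - u (k + 1)) (u 0) := by
    have h1 := hsummable.hasSum
    have h2 : Filter.Tendsto (fun K : ℕ => ∑ k ∈ Finset.range K, (u k - u (k+1)))
        Filter.atTop (nhds (∑' k, (u k - u (k+1)))) := h1.tendsto_sum_nat
    have h3 : (fun K : ℕ => ∑ k ∈ Finset.range K, (u k - u (k+1)))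
        = fun K => u 0 - u K := funext fun K => Finset.sum_range_sub' u K
    rw [h3] at h2
    have h4 : Filter.Tendsto (fun K : ℕ => u 0 - u K) Filter.atTop (nhds (u 0 - 0)) :=
      Filter.Tendsto.const_sub _ hu0
    rw [sub_zero] at h4
    have := tendsto_nhds_unique h2 h4
    rwa [this] at h1
  -- combine
  have hA' : HasSum (fun k : ℕ => u k - u (k + 1)) (coeff n (Phi φ (gsol φ hφ f))) := by
    have heq : (fun k : ℕ => (p : ℤ_[p]) ^ k * coeff n (Phi φ (stepg (Fseq φ hφ f k))))
        = fun k : ℕ => u k - u (k + 1) := funext hB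
    rw [← heq]
    exact hA
  have := hA'.unique hC
  rw [this]
  simp [hu, Fseq]


include hφ in
lemma phi_X : φ X = Ps p := by
  ext n
  rw [coeff_phi φ hφ]
  have h1 : ∀ m ∈ Finset.range (n+1),
      coeff m X * coeff n ((Ps p) ^ m)
      = if m = 1 then coeff n ((Ps p) ^ m) else 0 := by
    intro m _
    rw [coeff_X]
    split_ifs <;> simp
  rw [Finset.sum_congr rfl h1, Finset.sum_ite_eq' (Finset.range (n+1)) 1
    (fun m => coeff n ((Ps p) ^ m))]
  rcases Nat.eq_zero_or_pos n with rfl | hn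
  · rw [if_neg (by simp), coeff_Ps]
    simp
  · rw [if_pos (Finset.mem_range.mpr (by omega)), pow_one]

include hφ in
theorem trace_phi_and_one_add_X :
    (∀ h : PowerSeries ℤ_[p],
      @Algebra.trace (PowerSeries ℤ_[p]) (PowerSeries ℤ_[p]) _ _ φ.toAlgebra (φ h)
        = (p : PowerSeries ℤ_[p]) * h) ∧
    (∀ a : ℤ_[p],
      @Algebra.trace (PowerSeries ℤ_[p]) (PowerSeries ℤ_[p]) _ _ φ.toAlgebra
        (C a * (1 + X)) = 0) := by
  classical
  letI : Algebra (PowerSeries ℤ_[p]) (PowerSeries ℤ_[p]) := φ.toAlgebra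
  letI : Module (PowerSeries ℤ_[p]) (PowerSeries ℤ_[p]) := Algebra.toModule
  letI : SMul (PowerSeries ℤ_[p]) (PowerSeries ℤ_[p]) := Algebra.toSMul
  have halg : algebraMap (PowerSeries ℤ_[p]) (PowerSeries ℤ_[p]) = φ := rfl
  have hsmul : ∀ c x : PowerSeries ℤ_[p], c • x = φ c * x := fun c x => Algebra.smul_def c x
  have hp2 : 2 ≤ p := hp.out.two_le
  -- linear independence
  have hli : LinearIndependent (PowerSeries ℤ_[p])
      (fun i : Fin p => (X : PowerSeries ℤ_[p]) ^ (i : ℕ)) := by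
    rw [Fintype.linearIndependent_iff]
    intro c hc i
    have hc' : Phi φ c = 0 := by
      rw [Phi]
      rw [show (∑ i : Fin p, φ (c i) * X ^ (i:ℕ))
        = ∑ i : Fin p, c i • (X : PowerSeries ℤ_[p]) ^ (i:ℕ) from
        Finset.sum_congr rfl fun i _ => (hsmul _ _).symm]
      exact hc
    have := Phi_injective0 φ hφ c hc'
    rw [this]
    rfl
  -- spanning
  have hsp : ⊤ ≤ Submodule.span (PowerSeries ℤ_[p])
      (Set.range fun i : Fin p => (X : PowerSeries ℤ_[p]) ^ (i : ℕ)) := by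
    intro x _
    have hx : x = ∑ i : Fin p, gsol φ hφ x i • (X : PowerSeries ℤ_[p]) ^ (i:ℕ) := by
      conv_lhs => rw [← Phi_gsol φ hφ x]
      rw [Phi]
      exact Finset.sum_congr rfl fun i _ => hsmul _ _
    rw [hx]
    exact Submodule.sum_mem _ fun i _ =>
      Submodule.smul_mem _ _ (Submodule.subset_span ⟨i, rfl⟩)
  set b : Module.Basis (Fin p) (PowerSeries ℤ_[p]) (PowerSeries ℤ_[p]) := Module.Basis.mk hli hsp with hbdef
  have hb : ∀ i : Fin p, b i = (X : PowerSeries ℤ_[p]) ^ (i : ℕ) := fun i => Module.Basis.mk_apply hli hsp i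
  letI : Module.Free (PowerSeries ℤ_[p]) (PowerSeries ℤ_[p]) := Module.Free.of_basis b
  letI : Module.Finite (PowerSeries ℤ_[p]) (PowerSeries ℤ_[p]) := Module.Finite.of_basis b
  have hrank : Module.finrank (PowerSeries ℤ_[p]) (PowerSeries ℤ_[p]) = p := by
    rw [Module.finrank_eq_card_basis b, Fintype.card_fin]
  have htr_alg : ∀ h : PowerSeries ℤ_[p],
      Algebra.trace (PowerSeries ℤ_[p]) (PowerSeries ℤ_[p]) (φ h) = (p : PowerSeries ℤ_[p]) * h := by
    intro h
    have := @Algebra.trace_algebraMap (PowerSeries ℤ_[p]) (PowerSeries ℤ_[p]) _ _ _ _ _ h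
    rw [halg] at this
    rw [this, hrank, nsmul_eq_mul]
  refine ⟨htr_alg, ?_⟩
  -- the decomposition of X^p
  have i0 : Fin p := ⟨0, by omega⟩
  set cf : Fin p → ℤ_[p] := fun i => if (i : ℕ) = 0 then 0 else (p.choose (i : ℕ) : ℤ_[p]) with hcf
  have hXp : (X : PowerSeries ℤ_[p]) ^ p
      = (X : PowerSeries ℤ_[p]) • b ⟨0, by omega⟩ - ∑ i : Fin p, (C (cf i)) • b i := by
    have : ∀ i : Fin p, (C (cf i)) • b i = C (cf i) * X ^ (i:ℕ) := by
      intro i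
      rw [hsmul, phi_C φ hφ, hb]
    rw [Finset.sum_congr rfl fun i _ => this i, hsmul, phi_X φ hφ, hb]
    ext n
    rw [map_sub, pow_zero, mul_one, coeff_X_pow, coeff_Ps]
    have hterm : ∀ i : Fin p, coeff n (C (cf i) * X ^ (i:ℕ))
        = if n = (i:ℕ) then cf i else 0 := by
      intro i
      rw [coeff_C_mul, coeff_X_pow, mul_ite, mul_one, mul_zero]
    have hsum : coeff n (∑ i : Fin p, C (cf i) * X ^ (i:ℕ))
        = if n < p then (if n = 0 then 0 else (p.choose n : ℤ_[p])) else 0 := by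
      rw [map_sum, Finset.sum_congr rfl fun i _ => hterm i]
      rw [show (∑ i : Fin p, if n = (i:ℕ) then cf i else 0)
        = ∑ j ∈ Finset.range p, (if n = j then (if j = 0 then (0:ℤ_[p])
            else (p.choose j : ℤ_[p])) else 0) from
        Fin.sum_univ_eq_sum_range (fun j => if n = j then (if j = 0 then (0:ℤ_[p])
            else (p.choose j : ℤ_[p])) else 0) p]
      rw [Finset.sum_ite_eq (Finset.range p) n
        (fun j => if j = 0 then (0:ℤ_[p]) else (p.choose j : ℤ_[p]))]
      by_cases hn : n < p
      · rw [if_pos (Finset.mem_range.mpr hn), if_pos hn]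
      · rw [if_neg (by simpa using hn), if_neg hn]
    rw [hsum]
    rcases lt_trichotomy n p with hlt | rfl | hgt
    · rw [if_neg (Nat.ne_of_lt hlt), if_pos hlt]
      by_cases h0 : n = 0
      · simp [h0]
      · rw [if_neg h0, sub_self]
    · rw [if_pos rfl, if_neg (lt_irrefl _), if_neg hp.out.ne_zero, Nat.choose_self,
        Nat.cast_one, sub_zero]
    · rw [if_neg (by omega), if_neg (by omega), if_neg (by omega),
        Nat.choose_eq_zero_of_lt hgt, Nat.cast_zero, sub_zero]
  -- diagonal entries of multiplication by C c * X
  have hdiag : ∀ (c : ℤ_[p]) (i : Fin p), b.repr ((C c * X) * b i) i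
      = if (i : ℕ) = p - 1 then -(C c * (p : PowerSeries ℤ_[p])) else 0 := by
    intro c i
    by_cases hi : (i : ℕ) + 1 < p
    · have hXbi : (C c * X) * b i = (C c) • b ⟨(i:ℕ)+1, hi⟩ := by
        rw [hsmul, phi_C φ hφ, hb, hb]
        show (C c * X) * X ^ (i:ℕ) = C c * X ^ ((i:ℕ)+1)
        rw [pow_succ]; ring
      have hmapsmul : b.repr ((C c) • b ⟨(i:ℕ)+1, hi⟩)
          = (C c) • b.repr (b ⟨(i:ℕ)+1, hi⟩) := map_smul _ _ _
      rw [hXbi, hmapsmul, b.repr_self, Finsupp.smul_apply, Finsupp.single_apply,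
        if_neg (by intro h; have := congrArg Fin.val h; simp at this),
        smul_zero, if_neg (by omega)]
    · have hival : (i : ℕ) = p - 1 := by have := i.isLt; omega
      have hXbi : (C c * X) * b i = (C c) • ((X : PowerSeries ℤ_[p]) ^ p) := by
        rw [hsmul, phi_C φ hφ, hb, hival]
        have h1 : (p - 1) + 1 = p := by omega
        calc (C c * X) * X ^ (p-1) = C c * X ^ ((p-1)+1) := by rw [pow_succ]; ring
          _ = C c * X ^ p := by rw [h1]
      have hmapsmul : b.repr ((C c) • ((X : PowerSeries ℤ_[p]) ^ p))
          = (C c) • b.repr ((X : PowerSeries ℤ_[p]) ^ p) := map_smul _ _ _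
      have hXppart : b.repr ((X : PowerSeries ℤ_[p]) ^ p) i = -(p : PowerSeries ℤ_[p]) := by
        rw [hXp, map_sub, map_smul, map_sum]
        have hms : ∀ j : Fin p, b.repr ((C (cf j)) • b j)
            = (C (cf j)) • b.repr (b j) := fun j => map_smul _ _ _
        rw [Finset.sum_congr rfl fun j _ => hms j]
        rw [Finsupp.sub_apply, Finsupp.smul_apply, b.repr_self, Finsupp.single_apply,
          if_neg (by intro h; have := congrArg Fin.val h; simp [hival] at this; omega),
          smul_zero, Finset.sum_apply']
        have hjsum : ∀ j : Fin p, ((C (cf j)) • b.repr (b j)) i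
            = if j = i then C (cf j) else 0 := by
          intro j
          rw [b.repr_self, Finsupp.smul_apply, Finsupp.single_apply]
          split_ifs <;> simp [smul_eq_mul]
        rw [Finset.sum_congr rfl fun j _ => hjsum j,
          Finset.sum_ite_eq' Finset.univ i (fun j => C (cf j)), if_pos (Finset.mem_univ i)]
        have hcfi : cf i = (p : ℤ_[p]) := by
          have h1 : (1:ℕ) ≤ p := by omega
          rw [hcf]
          simp only [hival]
          rw [if_neg (by omega), Nat.choose_symm h1, Nat.choose_one_right]
        rw [hcfi, zero_sub, ← map_natCast (C (R := ℤ_[p])) p]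
      rw [hXbi, hmapsmul, Finsupp.smul_apply, hXppart, if_pos hival, smul_eq_mul,
        mul_neg]
  -- trace of C c * X
  have htrCX : ∀ c : ℤ_[p],
      Algebra.trace (PowerSeries ℤ_[p]) (PowerSeries ℤ_[p]) (C c * X)
      = -(C c * (p : PowerSeries ℤ_[p])) := by
    intro c
    rw [Algebra.trace_eq_matrix_trace b (C c * X), Matrix.trace]
    have hentry : ∀ i : Fin p, (Algebra.leftMulMatrix b (C c * X)).diag i
        = if (i : ℕ) = p - 1 then -(C c * (p : PowerSeries ℤ_[p])) else 0 := by
      intro i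
      rw [Matrix.diag_apply, Algebra.leftMulMatrix_eq_repr_mul, hdiag c i]
    rw [Finset.sum_congr rfl fun i _ => hentry i]
    have hcond : ∀ i : Fin p, ((i : ℕ) = p - 1) = (i = ⟨p - 1, by omega⟩) := by
      intro i
      simp [Fin.ext_iff]
    simp only [hcond]
    rw [Finset.sum_ite_eq' Finset.univ (⟨p - 1, by omega⟩ : Fin p)
      (fun _ => -(C c * (p : PowerSeries ℤ_[p]))), if_pos (Finset.mem_univ _)]
  -- conclusion
  intro a
  have hsplit : C a * (1 + X) = C a + C a * X := by ring
  have htrC : Algebra.trace (PowerSeries ℤ_[p]) (PowerSeries ℤ_[p]) (C a)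
      = (p : PowerSeries ℤ_[p]) * C a := by
    have := htr_alg (C a)
    rwa [phi_C φ hφ] at this
  rw [hsplit, map_add, htrC, htrCX a]
  ring


lemma one_sub_p_pow_ne_zero {n : ℕ} (hn : 0 < n) : (1 : ℤ_[p]) - (p:ℤ_[p])^n ≠ 0 := by
  intro h
  have hpn : (p:ℤ_[p])^n = 1 := by linear_combination -h
  have h1 : ‖(p:ℤ_[p])^n‖ < 1 := by
    have h0 := norm_p_pow_mul_le (p := p) n 1
    rw [mul_one] at h0
    exact lt_of_le_of_lt h0 (pow_lt_one₀ p_inv_nonneg p_inv_lt_one hn.ne')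
  rw [hpn, norm_one] at h1
  exact lt_irrefl _ h1

include hφ in
lemma eq_C_of_phi_fixed (f : PowerSeries ℤ_[p]) (h : φ f = f) :
    f = C (constantCoeff f) := by
  have hzero : ∀ n : ℕ, 0 < n → coeff n f = 0 := by
    intro n
    induction n using Nat.strong_induction_on with
    | _ n ih =>
      intro hn
      have hsum : coeff n f = ∑ m ∈ Finset.range (n + 1),
          coeff m f * coeff n ((Ps p) ^ m) := by
        conv_lhs => rw [← h]
        exact coeff_phi φ hφ f n
      have hsplit : ∑ m ∈ Finset.range (n + 1),
          coeff m f * coeff n ((Ps p) ^ m)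
          = coeff n f * (p:ℤ_[p])^n := by
        rw [Finset.sum_eq_single n]
        · rw [coeff_Ps_pow_self]
        · intro m hm hmn
          rw [Finset.mem_range] at hm
          rcases Nat.eq_zero_or_pos m with rfl | hm0
          · rw [pow_zero, coeff_one, if_neg hn.ne', mul_zero]
          · rw [ih m (by omega) hm0, zero_mul]
        · intro hmem
          exact absurd (Finset.mem_range.mpr (by omega)) hmem
      have hzero : coeff n f * (1 - (p:ℤ_[p])^n) = 0 := by
        rw [hsplit] at hsum
        linear_combination hsum
      rcases mul_eq_zero.mp hzero with h' | h'
      · exact h'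
      · exact absurd h' (one_sub_p_pow_ne_zero hn)
  ext n
  rcases Nat.eq_zero_or_pos n with rfl | hn
  · simp [coeff_zero_eq_constantCoeff]
  · rw [hzero n hn, coeff_C, if_neg hn.ne']

-- the key divisibility estimate for iterates
include hφ in
lemma constantCoeff_iter (g : PowerSeries ℤ_[p]) (hg : coeff 0 g = 0) (k : ℕ) :
    coeff 0 (φ^[k] g) = 0 := by
  induction k with
  | zero => exact hg
  | succ k ih => rw [Function.iterate_succ_apply', constantCoeff_phi φ hφ, ih]

include hφ in
lemma pow_dvd_iter (g : PowerSeries ℤ_[p]) (hg : coeff 0 g = 0) :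
    ∀ (k n : ℕ), (p : ℤ_[p])^k ∣ (p : ℤ_[p])^n * coeff n (φ^[k] g) := by
  intro k
  induction k with
  | zero => intro n; exact one_dvd _
  | succ k ih =>
    intro n
    rcases Nat.eq_zero_or_pos n with rfl | hn
    · rw [constantCoeff_iter φ hφ g hg, mul_zero]
      exact dvd_zero _
    rw [Function.iterate_succ_apply', coeff_phi φ hφ, Finset.mul_sum]
    refine Finset.dvd_sum fun m hm => ?_
    rw [Finset.mem_range] at hm
    rcases Nat.eq_zero_or_pos m with rfl | hm0
    · rw [constantCoeff_iter φ hφ g hg, zero_mul, mul_zero]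
      exact dvd_zero _
    rcases eq_or_ne m n with rfl | hmn
    · -- m = n
      rw [coeff_Ps_pow_self]
      have heq : (p:ℤ_[p])^m * (coeff m (φ^[k] g) * (p:ℤ_[p])^m)
          = ((p:ℤ_[p])^m * coeff m (φ^[k] g)) * (p:ℤ_[p])^m := by ring
      rw [heq, pow_succ]
      exact mul_dvd_mul (ih m) (dvd_pow_self _ hn.ne')
    · -- 0 < m < n
      have hmlt : m < n := by omega
      have hexp : (p:ℤ_[p])^n = (p:ℤ_[p])^m * (p:ℤ_[p])^(n-m) := by
        rw [← pow_add]
        congr 1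
        omega
      have heq : (p:ℤ_[p])^n * (coeff m (φ^[k] g) * coeff n ((Ps p)^m))
          = ((p:ℤ_[p])^m * coeff m (φ^[k] g))
            * ((p:ℤ_[p])^(n-m) * coeff n ((Ps p)^m)) := by
        rw [hexp]; ring
      rw [heq, pow_succ]
      exact mul_dvd_mul (ih m)
        (dvd_mul_of_dvd_left (dvd_pow_self _ (by omega : n - m ≠ 0)) _)

include hφ in
lemma norm_coeff_iter_le (g : PowerSeries ℤ_[p]) (hg : coeff 0 g = 0) (k n : ℕ) :
    ‖coeff n (φ^[k] g)‖ ≤ (p:ℝ)^n * ((p:ℝ)⁻¹)^k := by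
  obtain ⟨y, hy⟩ := pow_dvd_iter φ hφ g hg k n
  have hnorm : ‖(p:ℤ_[p])^n * coeff n (φ^[k] g)‖ ≤ ((p:ℝ)⁻¹)^k := by
    rw [hy]; exact norm_p_pow_mul_le k y
  have hmul : ‖(p:ℤ_[p])^n * coeff n (φ^[k] g)‖
      = ((p:ℝ)⁻¹)^n * ‖coeff n (φ^[k] g)‖ := by
    rw [norm_mul]
    congr 1
    rw [PadicInt.norm_p_pow, zpow_neg, inv_pow, zpow_natCast]
  have hppos : (0:ℝ) < (p:ℝ) := by
    have := hp.out.pos; positivity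
  have := hnorm
  rw [hmul] at this
  calc ‖coeff n (φ^[k] g)‖
      = (p:ℝ)^n * (((p:ℝ)⁻¹)^n * ‖coeff n (φ^[k] g)‖) := by
        rw [← mul_assoc, ← mul_pow, mul_inv_cancel₀ (ne_of_gt hppos), one_pow, one_mul]
    _ ≤ (p:ℝ)^n * ((p:ℝ)⁻¹)^k := by
        apply mul_le_mul_of_nonneg_left this (by positivity)


/-- The series `∑ₖ φᵏ g`. -/
noncomputable def fsol (g : PowerSeries ℤ_[p]) : PowerSeries ℤ_[p] :=
  PowerSeries.mk fun n => ∑' k : ℕ, coeff n (φ^[k] g)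

include hφ in
lemma hasSum_fsol (g : PowerSeries ℤ_[p]) (hg : coeff 0 g = 0) (n : ℕ) :
    HasSum (fun k : ℕ => coeff n (φ^[k] g)) (coeff n (fsol φ g)) := by
  have hsummable : Summable (fun k : ℕ => coeff n (φ^[k] g)) :=
    Summable.of_norm_bounded (summable_p_inv.mul_left ((p:ℝ)^n))
      (fun k => norm_coeff_iter_le φ hφ g hg k n)
  have : coeff n (fsol φ g) = ∑' k : ℕ, coeff n (φ^[k] g) := coeff_mk _ _
  rw [this]
  exact hsummable.hasSum

include hφ in
lemma fsol_eq (g : PowerSeries ℤ_[p]) (hg : coeff 0 g = 0) :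
    fsol φ g = g + φ (fsol φ g) := by
  ext n
  -- HasSum for φ fsol
  have hA : HasSum (fun k : ℕ => ∑ m ∈ Finset.range (n + 1),
      coeff m (φ^[k] g) * coeff n ((Ps p) ^ m))
      (∑ m ∈ Finset.range (n + 1), coeff m (fsol φ g) * coeff n ((Ps p) ^ m)) :=
    hasSum_sum fun m _ => (hasSum_fsol φ hφ g hg m).mul_right _
  have hfun : (fun k : ℕ => ∑ m ∈ Finset.range (n + 1),
      coeff m (φ^[k] g) * coeff n ((Ps p) ^ m))
      = fun k : ℕ => coeff n (φ^[k+1] g) := by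
    funext k
    rw [Function.iterate_succ_apply', coeff_phi φ hφ]
  rw [hfun] at hA
  rw [← coeff_phi φ hφ] at hA
  -- HasSum for the shifted series
  have hB : HasSum (fun k : ℕ => coeff n (φ^[k+1] g))
      (coeff n (fsol φ g) - coeff n g) := by
    rw [hasSum_nat_add_iff (f := fun k => coeff n ((⇑φ)^[k] g)) 1]
    have : coeff n (fsol φ g) - coeff n g
        + ∑ i ∈ Finset.range 1, coeff n (φ^[i] g) = coeff n (fsol φ g) := by
      rw [Finset.sum_range_one, Function.iterate_zero_apply]
      ring
    rw [this]
    exact hasSum_fsol φ hφ g hg n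
  have := hA.unique hB
  rw [map_add]
  linear_combination -this


end Phi2

end FES

/-- **The fundamental exact sequence.**
There is an exact sequence
`0 → ℤ_p → ℤ_p[[T]]^{ψ=id} --(1-φ)--> ℤ_p[[T]]^{ψ=0} → ℤ_p → 0`,
where the first map is the inclusion of constants and the last map is evaluation at `T = 0`. -/
theorem fundamental_exact_sequence
    (φ : PowerSeries ℤ_[p] →+* PowerSeries ℤ_[p]) (hφ : IsFrobenius p φ)
    (ψ : PowerSeries ℤ_[p] → PowerSeries ℤ_[p]) (hψ : IsPsi p φ ψ) :
    -- constants lie in `ℤ_p[[T]]^{ψ=id}` and the inclusion is injective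
    (∀ a : ℤ_[p], ψ (PowerSeries.C a) = PowerSeries.C a) ∧
    (∀ a b : ℤ_[p], PowerSeries.C a = PowerSeries.C b → a = b) ∧
    -- `1 - φ` maps `ℤ_p[[T]]^{ψ=id}` into `ℤ_p[[T]]^{ψ=0}`
    (∀ f : PowerSeries ℤ_[p], ψ f = f → ψ (f - φ f) = 0) ∧
    -- exactness at `ℤ_p[[T]]^{ψ=id}`: the kernel of `1 - φ` is the constants
    (∀ f : PowerSeries ℤ_[p], ψ f = f →
      (f - φ f = 0 ↔ ∃ a : ℤ_[p], f = PowerSeries.C a)) ∧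
    -- exactness at `ℤ_p[[T]]^{ψ=0}`: the image of `1 - φ` is the kernel of evaluation at `0`
    (∀ g : PowerSeries ℤ_[p], ψ g = 0 →
      (PowerSeries.constantCoeff g = 0 ↔
        ∃ f : PowerSeries ℤ_[p], ψ f = f ∧ f - φ f = g)) ∧
    -- surjectivity of evaluation at `0` on `ℤ_p[[T]]^{ψ=0}`
    (∀ a : ℤ_[p], ∃ g : PowerSeries ℤ_[p],
      ψ g = 0 ∧ PowerSeries.constantCoeff g = a) := by
  classical
  obtain ⟨htrφ, htrCX⟩ := FES.trace_phi_and_one_add_X φ hφ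
  have hcancel : ∀ x y : PowerSeries ℤ_[p],
      (p : PowerSeries ℤ_[p]) * x = (p : PowerSeries ℤ_[p]) * y → x = y :=
    fun x y h => mul_left_cancel₀ FES.p_ne_zero_ps h
  have hψφ : ∀ h, ψ (φ h) = h := fun h => hcancel _ _ (by rw [hψ (φ h), htrφ])
  have hψC : ∀ a : ℤ_[p], ψ (PowerSeries.C a) = PowerSeries.C a := fun a => by
    conv_lhs => rw [← FES.phi_C φ hφ a]
    rw [hψφ]
  have hψsub : ∀ x y, ψ (x - y) = ψ x - ψ y := fun x y => hcancel _ _ (by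
    rw [hψ (x - y), map_sub, ← hψ x, ← hψ y, mul_sub])
  have hψadd : ∀ x y, ψ (x + y) = ψ x + ψ y := fun x y => hcancel _ _ (by
    rw [hψ (x + y), map_add, ← hψ x, ← hψ y, mul_add])
  refine ⟨hψC, ?_, ?_, ?_, ?_, ?_⟩
  · -- injectivity of C
    intro a b h
    have := congrArg (PowerSeries.coeff (R := ℤ_[p]) 0) h
    simpa using this
  · -- 1 - φ maps ψ=id into ψ=0
    intro f hf
    rw [hψsub, hψφ, hf, sub_self]
  · -- kernel of 1 - φ
    intro f _
    constructor
    · intro h0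
      have hfix : φ f = f := (sub_eq_zero.mp h0).symm
      exact ⟨PowerSeries.constantCoeff f, FES.eq_C_of_phi_fixed φ hφ f hfix⟩
    · rintro ⟨a, rfl⟩
      rw [FES.phi_C φ hφ, sub_self]
  · -- image of 1 - φ
    intro g hg
    constructor
    · intro h0
      have hg0 : PowerSeries.coeff 0 g = 0 := by
        rwa [coeff_zero_eq_constantCoeff]
      have hfe := FES.fsol_eq φ hφ g hg0
      refine ⟨FES.fsol φ g, ?_, by linear_combination hfe⟩
      calc ψ (FES.fsol φ g) = ψ (g + φ (FES.fsol φ g)) := by rw [← hfe]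
        _ = ψ g + ψ (φ (FES.fsol φ g)) := hψadd _ _
        _ = FES.fsol φ g := by rw [hg, hψφ, zero_add]
    · rintro ⟨f, hψf, hfg⟩
      rw [← hfg, map_sub]
      have hc := FES.constantCoeff_phi φ hφ f
      rw [coeff_zero_eq_constantCoeff] at hc
      rw [hc, sub_self]
  · -- surjectivity of evaluation at 0
    intro a
    refine ⟨PowerSeries.C a * (1 + PowerSeries.X), ?_, ?_⟩
    · refine hcancel _ _ ?_
      rw [hψ (PowerSeries.C a * (1 + PowerSeries.X)), htrCX, mul_zero]
    · rw [map_mul, map_add, map_one, constantCoeff_X, constantCoeff_C, add_zero, mul_one]
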